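/- arXiv:2108.11241 — 2 statements merged into one kernel-verified Lean document; each statement's English description precedes it below -/
import Mathlib

section
/- Let A be a commutative ring. The map sending the connected component of the vertex ∞·X (for X ∈ GL₂(A)) to the coset GE₂(A)X is a well-defined bijection from the set of connected components of the graph Γ(A) to the coset space GE₂(A)\GL₂(A), and this bijection is compatible with the right GL₂(A)-actions on both sides (right multiplication of vertices by matrices, and right multiplication of cosets). -/
open Matrix

/-- A row `(a,b) ∈ A²` is unimodular if `∃ r s, r*a + s*b = 1`. -/
def IsUnimod {A : Type*} [CommRing A] (v : Fin 2 → A) : Prop :=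
  ∃ r s : A, r * v 0 + s * v 1 = 1

/-- Unimodular rows of length 2. -/
abbrev UnimodRow (A : Type*) [CommRing A] := {v : Fin 2 → A // IsUnimod v}

/-- Two unimodular rows are equivalent if they differ by multiplication by a unit. -/
instance vertexSetoid (A : Type*) [CommRing A] : Setoid (UnimodRow A) where
  r v w := ∃ u : Aˣ, (u : A) • v.1 = w.1
  iseqv := by
    refine ⟨fun v => ⟨1, by simp⟩, ?_, ?_⟩
    · rintro v w ⟨u, h⟩
      exact ⟨u⁻¹, by rw [← h, smul_smul, Units.inv_mul, one_smul]⟩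
    · rintro v w z ⟨u, h⟩ ⟨u', h'⟩
      exact ⟨u' * u, by rw [← h', ← h, smul_smul, ← Units.val_mul]⟩

/-- The vertices of the graph Γ(A): unimodular rows up to multiplication by a unit. -/
def Vertex (A : Type*) [CommRing A] := Quotient (vertexSetoid A)

/-- The graph Γ(A). -/
def GammaGraph (A : Type*) [CommRing A] : SimpleGraph (Vertex A) where
  Adj x y := x ≠ y ∧ ∃ v w : UnimodRow A, x = ⟦v⟧ ∧ y = ⟦w⟧ ∧
    IsUnit (v.1 0 * w.1 1 - v.1 1 * w.1 0)
  symm := ⟨by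
    rintro x y ⟨hne, v, w, hx, hy, hd⟩
    refine ⟨hne.symm, w, v, hy, hx, ?_⟩
    have h : w.1 0 * v.1 1 - w.1 1 * v.1 0 = -(v.1 0 * w.1 1 - v.1 1 * w.1 0) := by ring
    rw [h]
    exact hd.neg⟩
  loopless := ⟨fun x h => h.1 rfl⟩

theorem isUnimod_vecMul {A : Type*} [CommRing A] {v : Fin 2 → A} (h : IsUnimod v)
    (M : GL (Fin 2) A) : IsUnimod (vecMul v (M : Matrix (Fin 2) (Fin 2) A)) := by
  obtain ⟨r, s, hrs⟩ := h
  set w : Fin 2 → A := ((M⁻¹ : GL (Fin 2) A) : Matrix (Fin 2) (Fin 2) A) *ᵥ ![r, s] with hw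
  refine ⟨w 0, w 1, ?_⟩
  have h1 : vecMul v (M : Matrix (Fin 2) (Fin 2) A) ⬝ᵥ w = v ⬝ᵥ ![r, s] := by
    rw [hw, ← dotProduct_mulVec, mulVec_mulVec, Units.mul_inv, one_mulVec]
  simp only [dotProduct, Fin.sum_univ_two] at h1
  simp only [Matrix.cons_val_zero, Matrix.cons_val_one, Matrix.head_cons] at h1
  linear_combination h1 + hrs

/-- The right action of GL₂(A) on the vertices of Γ(A). -/
def vertexMul {A : Type*} [CommRing A] (x : Vertex A) (M : GL (Fin 2) A) : Vertex A :=
  Quotient.map (fun v => ⟨vecMul v.1 (M : Matrix (Fin 2) (Fin 2) A), isUnimod_vecMul v.2 M⟩)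
    (by
      rintro v w ⟨u, h⟩
      refine ⟨u, ?_⟩
      show (u : A) • (vecMul v.1 (M : Matrix (Fin 2) (Fin 2) A)) =
        vecMul w.1 (M : Matrix (Fin 2) (Fin 2) A)
      rw [← h]
      first
        | exact (Matrix.smul_vecMul _ _ _).symm
        | (ext j; simp [vecMul, dotProduct, Finset.mul_sum, mul_assoc])) x

/-- The vertex ∞ = [(1,0)]. -/
def vInf (A : Type*) [CommRing A] : Vertex A := ⟦⟨![1, 0], ⟨1, 0, by norm_num⟩⟩⟧

/-- The vertex 0 = [(0,1)]. -/
def vZero (A : Type*) [CommRing A] : Vertex A := ⟦⟨![0, 1], ⟨0, 1, by norm_num⟩⟩⟧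

/-- The vertex 1 = [(1,1)]. -/
def vOne (A : Type*) [CommRing A] : Vertex A := ⟦⟨![1, 1], ⟨1, 0, by norm_num⟩⟩⟧
open Matrix

/-- E(a) = [[a,1],[-1,0]] as an element of GL₂. -/
def Egl {A : Type*} [CommRing A] (a : A) : GL (Fin 2) A :=
  ⟨!![a, 1; -1, 0], !![0, -1; 1, a],
    by ext i j; fin_cases i <;> fin_cases j <;> simp [Matrix.mul_apply, Fin.sum_univ_two],
    by ext i j; fin_cases i <;> fin_cases j <;> simp [Matrix.mul_apply, Fin.sum_univ_two]⟩

/-- S(a) = [[a,1],[1,0]] as an element of GL₂. -/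
def Sgl {A : Type*} [CommRing A] (a : A) : GL (Fin 2) A :=
  ⟨!![a, 1; 1, 0], !![0, 1; 1, -a],
    by ext i j; fin_cases i <;> fin_cases j <;> simp [Matrix.mul_apply, Fin.sum_univ_two],
    by ext i j; fin_cases i <;> fin_cases j <;> simp [Matrix.mul_apply, Fin.sum_univ_two]⟩

/-- The elementary matrix E₁₂(a) = [[1,a],[0,1]] in GL₂. -/
def E12gl {A : Type*} [CommRing A] (a : A) : GL (Fin 2) A :=
  ⟨!![1, a; 0, 1], !![1, -a; 0, 1],
    by ext i j; fin_cases i <;> fin_cases j <;> simp [Matrix.mul_apply, Fin.sum_univ_two],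
    by ext i j; fin_cases i <;> fin_cases j <;> simp [Matrix.mul_apply, Fin.sum_univ_two]⟩

/-- The elementary matrix E₂₁(a) = [[1,0],[a,1]] in GL₂. -/
def E21gl {A : Type*} [CommRing A] (a : A) : GL (Fin 2) A :=
  ⟨!![1, 0; a, 1], !![1, 0; -a, 1],
    by ext i j; fin_cases i <;> fin_cases j <;> simp [Matrix.mul_apply, Fin.sum_univ_two],
    by ext i j; fin_cases i <;> fin_cases j <;> simp [Matrix.mul_apply, Fin.sum_univ_two]⟩

/-- GE₂(A): the subgroup of GL₂(A) generated by the elementary matrices and the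
invertible diagonal matrices. -/
def GE2 (A : Type*) [CommRing A] : Subgroup (GL (Fin 2) A) :=
  Subgroup.closure
    ({M | ∃ a : A, M = E12gl a} ∪ {M | ∃ a : A, M = E21gl a} ∪
      {M | (M : Matrix (Fin 2) (Fin 2) A) 0 1 = 0 ∧ (M : Matrix (Fin 2) (Fin 2) A) 1 0 = 0})

/-- Given `f : A → G` and a tuple `(a 0, …, a (n-1))`, the product
`f (a (n-1)) * ⋯ * f (a 1) * f (a 0)` (rightmost factor first). -/
def wordProd {A : Type*} {G : Type*} [Monoid G] (f : A → G) :
    {n : ℕ} → (Fin n → A) → G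
  | 0, _ => 1
  | n + 1, a => f (a (Fin.last n)) * wordProd f (fun j : Fin n => a j.castSucc)

section Aux

variable {A : Type*} [CommRing A]

lemma vecMul_e1 (M : Matrix (Fin 2) (Fin 2) A) : vecMul ![1,0] M = M 0 := by
  funext j; simp [vecMul, dotProduct, Fin.sum_univ_two]

lemma vecMul_e2 (M : Matrix (Fin 2) (Fin 2) A) : vecMul ![0,1] M = M 1 := by
  funext j; simp [vecMul, dotProduct, Fin.sum_univ_two]

lemma vertexMul_mk (v : UnimodRow A) (M : GL (Fin 2) A) :
    vertexMul ⟦v⟧ M = ⟦⟨vecMul v.1 (M : Matrix (Fin 2) (Fin 2) A), isUnimod_vecMul v.2 M⟩⟧ :=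
  rfl

lemma vertexMul_mul (x : Vertex A) (M N : GL (Fin 2) A) :
    vertexMul x (M * N) = vertexMul (vertexMul x M) N := by
  induction x using Quotient.ind with
  | _ v =>
    rw [vertexMul_mk, vertexMul_mk, vertexMul_mk]
    congr 1
    apply Subtype.ext
    show vecMul v.1 ((M * N : GL (Fin 2) A) : Matrix (Fin 2) (Fin 2) A) = _
    rw [Units.val_mul, ← vecMul_vecMul]

lemma det_isUnit (M : GL (Fin 2) A) : IsUnit ((M : Matrix (Fin 2) (Fin 2) A)).det :=
  (Matrix.isUnit_iff_isUnit_det _).1 M.isUnit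

/-- diag(u, d) as an element of GL₂. -/
def Dgl (u d : Aˣ) : GL (Fin 2) A :=
  ⟨!![(u : A), 0; 0, (d : A)], !![((u⁻¹ : Aˣ) : A), 0; 0, ((d⁻¹ : Aˣ) : A)],
    by ext i j; fin_cases i <;> fin_cases j <;>
      simp [Matrix.mul_apply, Fin.sum_univ_two],
    by ext i j; fin_cases i <;> fin_cases j <;>
      simp [Matrix.mul_apply, Fin.sum_univ_two]⟩

lemma E12gl_mem (a : A) : E12gl a ∈ GE2 A :=
  Subgroup.subset_closure (Or.inl (Or.inl ⟨a, rfl⟩))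

lemma E21gl_mem (a : A) : E21gl a ∈ GE2 A :=
  Subgroup.subset_closure (Or.inl (Or.inr ⟨a, rfl⟩))

lemma diag_mem (M : GL (Fin 2) A) (h1 : (M : Matrix (Fin 2) (Fin 2) A) 0 1 = 0)
    (h2 : (M : Matrix (Fin 2) (Fin 2) A) 1 0 = 0) : M ∈ GE2 A :=
  Subgroup.subset_closure (Or.inr ⟨h1, h2⟩)

lemma Dgl_mem (u d : Aˣ) : Dgl u d ∈ GE2 A :=
  diag_mem _ (by simp [Dgl]) (by simp [Dgl])

lemma mem_GE2_of_01_eq_zero (Z : GL (Fin 2) A)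
    (h : (Z : Matrix (Fin 2) (Fin 2) A) 0 1 = 0) : Z ∈ GE2 A := by
  have hdet := det_isUnit Z
  rw [Matrix.det_fin_two, h] at hdet
  have hdet' : IsUnit ((Z : Matrix (Fin 2) (Fin 2) A) 0 0 *
      (Z : Matrix (Fin 2) (Fin 2) A) 1 1) := by simpa using hdet
  obtain ⟨u, hu⟩ := isUnit_of_mul_isUnit_left hdet'
  obtain ⟨d, hd⟩ := isUnit_of_mul_isUnit_right hdet'
  have key : Z = E21gl ((Z : Matrix (Fin 2) (Fin 2) A) 1 0 * ((u⁻¹ : Aˣ) : A)) * Dgl u d := by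
    apply Units.ext
    rw [Units.val_mul]
    ext i j
    fin_cases i <;> fin_cases j <;>
      simp [E21gl, Dgl, Matrix.mul_apply, Fin.sum_univ_two, h, ← hu, ← hd,
        mul_assoc, Units.inv_mul]
  rw [key]
  exact mul_mem (E21gl_mem _) (Dgl_mem _ _)

lemma mem_GE2_of_00_eq_zero (Z : GL (Fin 2) A)
    (h : (Z : Matrix (Fin 2) (Fin 2) A) 0 0 = 0) : Z ∈ GE2 A := by
  have hdet := det_isUnit Z
  rw [Matrix.det_fin_two, h] at hdet
  have hbc : IsUnit ((Z : Matrix (Fin 2) (Fin 2) A) 0 1 *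
      (Z : Matrix (Fin 2) (Fin 2) A) 1 0) := by
    have := hdet.neg
    simpa using this
  obtain ⟨b, hb⟩ := isUnit_of_mul_isUnit_left hbc
  obtain ⟨c, hc⟩ := isUnit_of_mul_isUnit_right hbc
  have key : Z * E12gl (-(((c⁻¹ : Aˣ) : A) * (Z : Matrix (Fin 2) (Fin 2) A) 1 1)) =
      E12gl (b : A) * E21gl (-((b⁻¹ : Aˣ) : A)) * E12gl (b : A) * Dgl (-(b * c)) 1 := by
    apply Units.ext
    simp only [Units.val_mul]
    ext i j
    fin_cases i <;> fin_cases j <;>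
      simp [E12gl, E21gl, Dgl, Matrix.mul_apply, Fin.sum_univ_two, h, ← hb, ← hc,
        Units.mul_inv_cancel_left, Units.inv_mul_cancel_left, mul_assoc]
  have hz : Z = (E12gl (b : A) * E21gl (-((b⁻¹ : Aˣ) : A)) * E12gl (b : A) *
      Dgl (-(b * c)) 1) * (E12gl (-(((c⁻¹ : Aˣ) : A) * (Z : Matrix (Fin 2) (Fin 2) A) 1 1)))⁻¹ := by
    rw [← key, mul_inv_cancel_right]
  rw [hz]
  exact mul_mem (mul_mem (mul_mem (mul_mem (E12gl_mem _) (E21gl_mem _)) (E12gl_mem _))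
    (Dgl_mem _ _)) (inv_mem (E12gl_mem _))

lemma vInf_eq : vInf A = ⟦⟨![1, 0], ⟨1, 0, by norm_num⟩⟩⟧ := rfl

/-- The stabilizer of ∞ lies in GE₂. -/
lemma stab_mem (Z : GL (Fin 2) A) (h : vertexMul (vInf A) Z = vInf A) : Z ∈ GE2 A := by
  rw [vInf_eq, vertexMul_mk] at h
  obtain ⟨u, hu⟩ := Quotient.exact h
  have h1 := congrFun hu 1
  simp only [Pi.smul_apply, smul_eq_mul, vecMul_e1] at h1
  simp only [Matrix.cons_val_one, Matrix.head_cons] at h1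
  apply mem_GE2_of_01_eq_zero
  have : ((u⁻¹ : Aˣ) : A) * ((u : A) * (Z : Matrix (Fin 2) (Fin 2) A) 0 1) = 0 := by
    rw [h1]; simp
  rwa [← mul_assoc, Units.inv_mul, one_mul] at this

/-- Every vertex has the form ∞ · X. -/
lemma exists_X (x : Vertex A) : ∃ X : GL (Fin 2) A, vertexMul (vInf A) X = x := by
  induction x using Quotient.ind with
  | _ v =>
    obtain ⟨r, s, hrs⟩ := v.2
    refine ⟨⟨!![v.1 0, v.1 1; -s, r], !![r, -(v.1 1); s, v.1 0], ?_, ?_⟩, ?_⟩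
    · ext i j
      fin_cases i <;> fin_cases j <;>
        simp [Matrix.mul_apply, Fin.sum_univ_two] <;>
        first
          | linear_combination hrs
          | ring1
    · ext i j
      fin_cases i <;> fin_cases j <;>
        simp [Matrix.mul_apply, Fin.sum_univ_two] <;>
        first
          | linear_combination hrs
          | ring1
    · rw [vInf_eq, vertexMul_mk]
      apply Quotient.sound
      refine ⟨1, ?_⟩
      show (1 : A) • vecMul ![1, 0] _ = v.1
      rw [one_smul, vecMul_e1]
      funext j
      fin_cases j <;> simp

lemma cross_unit_mul (v w : Fin 2 → A) (M : GL (Fin 2) A)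
    (h : IsUnit (v 0 * w 1 - v 1 * w 0)) :
    IsUnit (vecMul v (M : Matrix (Fin 2) (Fin 2) A) 0 *
        vecMul w (M : Matrix (Fin 2) (Fin 2) A) 1 -
      vecMul v (M : Matrix (Fin 2) (Fin 2) A) 1 *
        vecMul w (M : Matrix (Fin 2) (Fin 2) A) 0) := by
  have hdet := det_isUnit M
  rw [Matrix.det_fin_two] at hdet
  have he : vecMul v (M : Matrix (Fin 2) (Fin 2) A) 0 *
        vecMul w (M : Matrix (Fin 2) (Fin 2) A) 1 -
      vecMul v (M : Matrix (Fin 2) (Fin 2) A) 1 *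
        vecMul w (M : Matrix (Fin 2) (Fin 2) A) 0 =
      (v 0 * w 1 - v 1 * w 0) *
        ((M : Matrix (Fin 2) (Fin 2) A) 0 0 * (M : Matrix (Fin 2) (Fin 2) A) 1 1 -
          (M : Matrix (Fin 2) (Fin 2) A) 0 1 * (M : Matrix (Fin 2) (Fin 2) A) 1 0) := by
    simp [vecMul, dotProduct, Fin.sum_univ_two]
    ring
  rw [he]
  exact h.mul hdet

lemma reach_of_cross (v w : UnimodRow A)
    (h : IsUnit (v.1 0 * w.1 1 - v.1 1 * w.1 0)) :
    (GammaGraph A).Reachable ⟦v⟧ ⟦w⟧ := by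
  by_cases heq : (⟦v⟧ : Vertex A) = ⟦w⟧
  · rw [heq]; exact SimpleGraph.Reachable.refl _
  · exact SimpleGraph.Adj.reachable ⟨heq, v, w, rfl, rfl, h⟩

lemma reachable_vertexMul {x y : Vertex A} (M : GL (Fin 2) A)
    (h : (GammaGraph A).Reachable x y) :
    (GammaGraph A).Reachable (vertexMul x M) (vertexMul y M) := by
  rw [SimpleGraph.reachable_iff_reflTransGen] at h
  induction h with
  | refl => rfl
  | tail _ hbc ih =>
    refine ih.trans ?_
    obtain ⟨_, v, w, hb, hc, hd⟩ := hbc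
    rw [hb, hc, vertexMul_mk, vertexMul_mk]
    exact reach_of_cross _ _ (cross_unit_mul _ _ M hd)

lemma gen_reach (E : GL (Fin 2) A)
    (hE : E ∈ ({M | ∃ a : A, M = E12gl a} ∪ {M | ∃ a : A, M = E21gl a} ∪
      {M | (M : Matrix (Fin 2) (Fin 2) A) 0 1 = 0 ∧ (M : Matrix (Fin 2) (Fin 2) A) 1 0 = 0})) :
    ∀ X : GL (Fin 2) A,
      (GammaGraph A).Reachable (vertexMul (vInf A) (E * X)) (vertexMul (vInf A) X) := by
  intro X
  rw [vertexMul_mul]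
  rcases hE with (⟨a, rfl⟩ | ⟨a, rfl⟩) | ⟨h1, h2⟩
  · -- E12 case
    refine reachable_vertexMul X ?_
    rw [vInf_eq, vertexMul_mk]
    have h1 : (GammaGraph A).Reachable
        ⟦⟨vecMul ![1, 0] ((E12gl a : GL (Fin 2) A) : Matrix (Fin 2) (Fin 2) A),
          isUnimod_vecMul ⟨1, 0, by norm_num⟩ (E12gl a)⟩⟧
        ⟦(⟨![0, 1], ⟨0, 1, by norm_num⟩⟩ : UnimodRow A)⟧ := by
      apply reach_of_cross
      simp [E12gl, vecMul_e1]
    have h2 : (GammaGraph A).Reachable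
        ⟦(⟨![0, 1], ⟨0, 1, by norm_num⟩⟩ : UnimodRow A)⟧
        ⟦(⟨![1, 0], ⟨1, 0, by norm_num⟩⟩ : UnimodRow A)⟧ := by
      apply reach_of_cross
      simp
    exact h1.trans h2
  · -- E21 case
    have : vertexMul (vInf A) (E21gl a) = vInf A := by
      rw [vInf_eq, vertexMul_mk]
      apply Quotient.sound
      refine ⟨1, ?_⟩
      show (1 : A) • vecMul ![1, 0] _ = ![1, 0]
      rw [one_smul, vecMul_e1]
      funext j; fin_cases j <;> simp [E21gl]
    rw [this]
  · -- diagonal case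
    have hdet := det_isUnit E
    rw [Matrix.det_fin_two, h1, h2] at hdet
    have hu : IsUnit ((E : Matrix (Fin 2) (Fin 2) A) 0 0) := by
      apply isUnit_of_mul_isUnit_left (y := (E : Matrix (Fin 2) (Fin 2) A) 1 1)
      simpa using hdet
    obtain ⟨u, hu⟩ := hu
    have : vertexMul (vInf A) E = vInf A := by
      rw [vInf_eq, vertexMul_mk]
      apply Quotient.sound
      refine ⟨u⁻¹, ?_⟩
      show ((u⁻¹ : Aˣ) : A) • vecMul ![1, 0] (E : Matrix (Fin 2) (Fin 2) A) = ![1, 0]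
      rw [vecMul_e1]
      funext j; fin_cases j <;> simp [← hu, h1]
    rw [this]

lemma GE2_reach (E : GL (Fin 2) A) (hE : E ∈ GE2 A) :
    ∀ X : GL (Fin 2) A,
      (GammaGraph A).Reachable (vertexMul (vInf A) (E * X)) (vertexMul (vInf A) X) := by
  induction hE using Subgroup.closure_induction with
  | mem E hE => exact gen_reach E hE
  | one => intro X; rw [one_mul]
  | mul a b _ _ ha hb =>
    intro X
    rw [mul_assoc]
    exact (ha (b * X)).trans (hb X)
  | inv a _ ha =>
    intro X
    have h := ha (a⁻¹ * X)
    rw [← mul_assoc, mul_inv_cancel, one_mul] at h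
    exact h.symm

lemma vertexMul_one (x : Vertex A) : vertexMul x 1 = x := by
  induction x using Quotient.ind with
  | _ v =>
    rw [vertexMul_mk]
    apply Quotient.sound
    refine ⟨1, ?_⟩
    show (1 : A) • vecMul v.1 ((1 : GL (Fin 2) A) : Matrix (Fin 2) (Fin 2) A) = v.1
    rw [one_smul, Units.val_one, vecMul_one]

lemma adj_coset {x y : Vertex A} (hadj : (GammaGraph A).Adj x y)
    (X Y : GL (Fin 2) A) (hX : vertexMul (vInf A) X = x) (hY : vertexMul (vInf A) Y = y) :
    Y * X⁻¹ ∈ GE2 A := by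
  obtain ⟨-, v, w, hx, hy, hd⟩ := hadj
  have hdet : IsUnit (!![v.1 0, v.1 1; w.1 0, w.1 1] : Matrix (Fin 2) (Fin 2) A).det := by
    rw [Matrix.det_fin_two]; simpa using hd
  have hN : IsUnit (!![v.1 0, v.1 1; w.1 0, w.1 1] : Matrix (Fin 2) (Fin 2) A) :=
    (Matrix.isUnit_iff_isUnit_det _).2 hdet
  set N : GL (Fin 2) A := hN.unit with hNdef
  have hNval : (N : Matrix (Fin 2) (Fin 2) A) = !![v.1 0, v.1 1; w.1 0, w.1 1] := hN.unit_spec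
  have hv : vecMul ![1, 0] (N : Matrix (Fin 2) (Fin 2) A) = v.1 := by
    rw [hNval, vecMul_e1]; funext j; fin_cases j <;> simp
  have hw : vecMul ![0, 1] (N : Matrix (Fin 2) (Fin 2) A) = w.1 := by
    rw [hNval, vecMul_e2]; funext j; fin_cases j <;> simp
  have hXmem : X * N⁻¹ ∈ GE2 A := by
    apply mem_GE2_of_01_eq_zero
    rw [hx, vInf_eq, vertexMul_mk] at hX
    obtain ⟨u, hu⟩ := Quotient.exact hX
    have step : vecMul ![1, 0] ((X * N⁻¹ : GL (Fin 2) A) : Matrix (Fin 2) (Fin 2) A)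
        = ((u⁻¹ : Aˣ) : A) • (![1, 0] : Fin 2 → A) := by
      rw [Units.val_mul, ← vecMul_vecMul]
      have hq : vecMul ![1, 0] (X : Matrix (Fin 2) (Fin 2) A) = ((u⁻¹ : Aˣ) : A) • v.1 := by
        rw [← hu, smul_smul, Units.inv_mul, one_smul]
      rw [hq, smul_vecMul, ← hv, vecMul_vecMul]
      rw [Units.mul_inv, vecMul_one]
    rw [vecMul_e1] at step
    have := congrFun step 1
    simpa using this
  have hYmem : Y * N⁻¹ ∈ GE2 A := by
    apply mem_GE2_of_00_eq_zero
    rw [hy, vInf_eq, vertexMul_mk] at hY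
    obtain ⟨u, hu⟩ := Quotient.exact hY
    have step : vecMul ![1, 0] ((Y * N⁻¹ : GL (Fin 2) A) : Matrix (Fin 2) (Fin 2) A)
        = ((u⁻¹ : Aˣ) : A) • (![0, 1] : Fin 2 → A) := by
      rw [Units.val_mul, ← vecMul_vecMul]
      have hq : vecMul ![1, 0] (Y : Matrix (Fin 2) (Fin 2) A) = ((u⁻¹ : Aˣ) : A) • w.1 := by
        rw [← hu, smul_smul, Units.inv_mul, one_smul]
      rw [hq, smul_vecMul, ← hw, vecMul_vecMul]
      rw [Units.mul_inv, vecMul_one]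
    rw [vecMul_e1] at step
    have := congrFun step 0
    simpa using this
  have : Y * X⁻¹ = (Y * N⁻¹) * (X * N⁻¹)⁻¹ := by group
  rw [this]
  exact mul_mem hYmem (inv_mem hXmem)

end Aux

/-- The map sending the connected component of ∞·X to the coset GE₂(A)X is a
well-defined bijection from the set of connected components of Γ(A) to GE₂(A)\GL₂(A),
compatible with the right GL₂(A)-actions. -/
theorem stmt6 (A : Type*) [CommRing A] :
    ∃ f : (GammaGraph A).ConnectedComponent →
        Quotient (QuotientGroup.rightRel (GE2 A)),
      Function.Bijective f ∧
      (∀ X : GL (Fin 2) A,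
        f ((GammaGraph A).connectedComponentMk (vertexMul (vInf A) X)) =
          Quotient.mk (QuotientGroup.rightRel (GE2 A)) X) ∧
      (∀ (X M : GL (Fin 2) A),
        f ((GammaGraph A).connectedComponentMk (vertexMul (vertexMul (vInf A) X) M)) =
          Quotient.mk (QuotientGroup.rightRel (GE2 A)) (X * M)) := by
    classical
  have key0 : ∀ x : Vertex A, vertexMul (vInf A) (Classical.choose (exists_X x)) = x :=
    fun x => Classical.choose_spec (exists_X x)
  set g : Vertex A → Quotient (QuotientGroup.rightRel (GE2 A)) :=
    fun x => Quotient.mk (QuotientGroup.rightRel (GE2 A)) (Classical.choose (exists_X x))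
    with hgdef
  have key : ∀ X : GL (Fin 2) A,
      g (vertexMul (vInf A) X) = Quotient.mk (QuotientGroup.rightRel (GE2 A)) X := by
    intro X
    set X' := Classical.choose (exists_X (vertexMul (vInf A) X)) with hX'def
    have hX' : vertexMul (vInf A) X' = vertexMul (vInf A) X := key0 _
    apply Quotient.sound
    refine QuotientGroup.rightRel_apply.mpr ?_
    apply stab_mem
    rw [← hX'def]
    rw [vertexMul_mul, ← hX', ← vertexMul_mul, mul_inv_cancel, vertexMul_one]
  have hadj : ∀ x y : Vertex A, (GammaGraph A).Adj x y → g x = g y := by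
    intro x y h
    exact Quotient.sound (QuotientGroup.rightRel_apply.mpr (adj_coset h _ _ (key0 x) (key0 y)))
  have hreach : ∀ x y : Vertex A, (GammaGraph A).Reachable x y → g x = g y := by
    intro x y h
    rw [SimpleGraph.reachable_iff_reflTransGen] at h
    induction h with
    | refl => rfl
    | tail _ hbc ih => exact ih.trans (hadj _ _ hbc)
  refine ⟨Quot.lift g hreach, ⟨?_, ?_⟩, fun X => key X, fun X M => ?_⟩
  · -- injective
    intro c c' h
    induction c using SimpleGraph.ConnectedComponent.ind with
    | _ x =>
      induction c' using SimpleGraph.ConnectedComponent.ind with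
      | _ y =>
        obtain ⟨X, hX⟩ := exists_X x
        obtain ⟨Y, hY⟩ := exists_X y
        have h1 : Quotient.mk (QuotientGroup.rightRel (GE2 A)) X =
            Quotient.mk (QuotientGroup.rightRel (GE2 A)) Y := by
          rw [← key X, ← key Y, hX, hY]
          exact h
        have h2 : Y * X⁻¹ ∈ GE2 A := QuotientGroup.rightRel_apply.mp (Quotient.exact h1)
        have h3 := GE2_reach _ h2 X
        rw [inv_mul_cancel_right, hX, hY] at h3
        exact (SimpleGraph.ConnectedComponent.sound h3).symm
  · -- surjective
    intro q
    induction q using Quotient.ind with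
    | _ X => exact ⟨(GammaGraph A).connectedComponentMk (vertexMul (vInf A) X), key X⟩
  · rw [← vertexMul_mul]
    exact key (X * M)
end

section
/- Let A be a commutative ring. The subset 𝔹 := { β(u,a) : u ∈ A^×, a ∈ A } of C(A), where β(u,a) := h(u)y(ua), is a subgroup of C(A), and the homomorphism ψ: C(A) → SL₂(A) restricts to a group isomorphism from 𝔹 onto the group B of lower-triangular matrices in SL₂(A). -/
open Matrix

/-- The word `h(u) = ε(-u)ε(-u⁻¹)ε(-u)` in the free group on the symbols `ε(a)`, `a ∈ A`. -/
def hFree {A : Type*} [CommRing A] (u : Aˣ) : FreeGroup A :=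
  FreeGroup.of (-(u : A)) * FreeGroup.of (-((u⁻¹ : Aˣ) : A)) * FreeGroup.of (-(u : A))

/-- The defining relations of Cohn's group C(A). -/
def CRels (A : Type*) [CommRing A] : Set (FreeGroup A) :=
  {x | ∃ u v : Aˣ, x = hFree u * hFree v * (hFree (u * v))⁻¹} ∪
  {x | ∃ a b : A, x = FreeGroup.of a * FreeGroup.of (0 : A) * FreeGroup.of b *
      (hFree (-1) * FreeGroup.of (a + b))⁻¹} ∪
  {x | ∃ (u : Aˣ) (a : A), x = hFree u * FreeGroup.of a * hFree u *
      (FreeGroup.of ((u : A) ^ 2 * a))⁻¹}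

/-- Cohn's group C(A), presented by generators ε(a), a ∈ A, and the three families of
relations h(u)h(v) = h(uv), ε(a)ε(0)ε(b) = h(-1)ε(a+b), h(u)ε(a)h(u) = ε(u²a). -/
abbrev CGroup (A : Type*) [CommRing A] := PresentedGroup (CRels A)

/-- The generator ε(a) of C(A). -/
def epsC {A : Type*} [CommRing A] (a : A) : CGroup A := PresentedGroup.of a

/-- h(u) = ε(-u)ε(-u⁻¹)ε(-u) in C(A). -/
def hC {A : Type*} [CommRing A] (u : Aˣ) : CGroup A :=
  epsC (-(u : A)) * epsC (-((u⁻¹ : Aˣ) : A)) * epsC (-(u : A))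

/-- y(a) = ε(0)³ε(a) in C(A). -/
def yC {A : Type*} [CommRing A] (a : A) : CGroup A := (epsC (0 : A)) ^ 3 * epsC a

/-- ȳ(a) = ε(-a)ε(0)³ in C(A). -/
def ybarC {A : Type*} [CommRing A] (a : A) : CGroup A := epsC (-a) * (epsC (0 : A)) ^ 3

/-- β(u,a) = h(u)y(ua) in C(A). -/
def betaC {A : Type*} [CommRing A] (u : Aˣ) (a : A) : CGroup A := hC u * yC ((u : A) * a)

/-- E(a) = [[a,1],[-1,0]] as an element of SL₂. -/
def ESL {A : Type*} [CommRing A] (a : A) : Matrix.SpecialLinearGroup (Fin 2) A :=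
  ⟨!![a, 1; -1, 0], by simp [Matrix.det_fin_two_of]⟩

/-- D(u) = diag(u, u⁻¹) as an element of SL₂. -/
def DSL {A : Type*} [CommRing A] (u : Aˣ) : Matrix.SpecialLinearGroup (Fin 2) A :=
  ⟨!![(u : A), 0; 0, ((u⁻¹ : Aˣ) : A)], by simp [Matrix.det_fin_two_of]⟩

theorem ESL_h {A : Type*} [CommRing A] (u : Aˣ) :
    ESL (-(u : A)) * ESL (-((u⁻¹ : Aˣ) : A)) * ESL (-(u : A)) = DSL u := by
  apply Subtype.ext
  show (!![-(u:A), 1; -1, 0] * !![-((u⁻¹:Aˣ):A), 1; -1, 0]) * !![-(u:A), 1; -1, 0] = _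
  ext i j
  fin_cases i <;> fin_cases j <;>
    simp [DSL, Matrix.mul_apply, Fin.sum_univ_two]

theorem DSL_mul {A : Type*} [CommRing A] (u v : Aˣ) : DSL u * DSL v = DSL (u * v) := by
  apply Subtype.ext
  show (!![(u:A), 0; 0, ((u⁻¹:Aˣ):A)] * !![(v:A), 0; 0, ((v⁻¹:Aˣ):A)]) = _
  ext i j
  fin_cases i <;> fin_cases j <;>
    simp [DSL, Matrix.mul_apply, Fin.sum_univ_two, mul_comm]

theorem ESL_rel2 {A : Type*} [CommRing A] (a b : A) :
    ESL a * ESL (0 : A) * ESL b = DSL (-1) * ESL (a + b) := by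
  apply Subtype.ext
  show (!![a, 1; -1, 0] * !![(0:A), 1; -1, 0]) * !![b, 1; -1, 0] =
    !![((-1:Aˣ):A), 0; 0, (((-1:Aˣ)⁻¹:Aˣ):A)] * !![a + b, 1; -1, 0]
  ext i j
  fin_cases i <;> fin_cases j <;>
    simp [DSL, ESL, Matrix.mul_apply, Fin.sum_univ_two] <;> ring

theorem ESL_rel3 {A : Type*} [CommRing A] (u : Aˣ) (a : A) :
    DSL u * ESL a * DSL u = ESL ((u : A) ^ 2 * a) := by
  apply Subtype.ext
  show (!![(u:A), 0; 0, ((u⁻¹:Aˣ):A)] * !![a, 1; -1, 0]) * !![(u:A), 0; 0, ((u⁻¹:Aˣ):A)] = _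
  ext i j
  fin_cases i <;> fin_cases j <;>
    simp [ESL, Matrix.mul_apply, Fin.sum_univ_two] <;> ring

theorem lift_hFree {A : Type*} [CommRing A] (u : Aˣ) :
    FreeGroup.lift (fun a : A => ESL a) (hFree u) = DSL u := by
  simp only [hFree, _root_.map_mul, FreeGroup.lift_apply_of]
  exact ESL_h u

theorem CRels_liftable {A : Type*} [CommRing A] :
    ∀ r ∈ CRels A, FreeGroup.lift (fun a : A => ESL a) r = 1 := by
  rintro r ((⟨u, v, rfl⟩ | ⟨a, b, rfl⟩) | ⟨u, a, rfl⟩)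
  · rw [_root_.map_mul, _root_.map_mul, map_inv, lift_hFree, lift_hFree, lift_hFree, DSL_mul,
      mul_inv_cancel]
  · simp only [_root_.map_mul, map_inv, FreeGroup.lift_apply_of, lift_hFree]
    rw [ESL_rel2, mul_inv_cancel]
  · simp only [_root_.map_mul, map_inv, FreeGroup.lift_apply_of, lift_hFree]
    rw [ESL_rel3, mul_inv_cancel]

/-- The homomorphism ψ : C(A) → SL₂(A) with ψ(ε(a)) = E(a). -/
def psiC (A : Type*) [CommRing A] : CGroup A →* Matrix.SpecialLinearGroup (Fin 2) A :=
  PresentedGroup.toGroup CRels_liftable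

@[simp] theorem psiC_epsC {A : Type*} [CommRing A] (a : A) : psiC A (epsC a) = ESL a :=
  PresentedGroup.toGroup.of _


section Aux

variable {A : Type*} [CommRing A]

/-- The quotient map `FreeGroup A →* C(A)`. -/
def mkC (A : Type*) [CommRing A] : FreeGroup A →* CGroup A :=
  QuotientGroup.mk' _

theorem mkC_of (a : A) : mkC A (FreeGroup.of a) = epsC a := rfl

theorem mkC_hFree (u : Aˣ) : mkC A (hFree u) = hC u := by
  simp only [hFree, _root_.map_mul, mkC_of, hC]

theorem mkC_rel {r : FreeGroup A} (h : r ∈ CRels A) : mkC A r = 1 :=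
  (QuotientGroup.eq_one_iff _).2 (Subgroup.subset_normalClosure h)

theorem hC_mul (u v : Aˣ) : hC u * hC v = hC (u * v) := by
  have h := mkC_rel (A := A) (Or.inl (Or.inl ⟨u, v, rfl⟩))
  rw [_root_.map_mul, _root_.map_mul, map_inv, mkC_hFree, mkC_hFree, mkC_hFree,
    mul_inv_eq_one] at h
  exact h

theorem eps_rel2 (a b : A) : epsC a * epsC (0 : A) * epsC b = hC (-1) * epsC (a + b) := by
  have h := mkC_rel (A := A) (Or.inl (Or.inr ⟨a, b, rfl⟩))
  rw [_root_.map_mul, _root_.map_mul, _root_.map_mul, map_inv, _root_.map_mul,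
    mkC_hFree, mkC_of, mkC_of, mkC_of, mkC_of, mul_inv_eq_one] at h
  exact h

theorem eps_rel3 (u : Aˣ) (a : A) :
    hC u * epsC a * hC u = epsC ((u : A) ^ 2 * a) := by
  have h := mkC_rel (A := A) (Or.inr ⟨u, a, rfl⟩)
  rw [_root_.map_mul, _root_.map_mul, _root_.map_mul, map_inv, mkC_hFree,
    mkC_of, mkC_of, mul_inv_eq_one] at h
  exact h

theorem hC_one : hC (1 : Aˣ) = 1 := by
  have h := hC_mul (1 : Aˣ) 1
  rw [mul_one] at h
  exact mul_left_cancel (h.trans (mul_one _).symm)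

theorem hC_inv (u : Aˣ) : (hC u)⁻¹ = hC u⁻¹ := by
  have h : hC u * hC u⁻¹ = 1 := by rw [hC_mul, mul_inv_cancel, hC_one]
  exact inv_eq_of_mul_eq_one_right h

theorem eps0_sq : (epsC (0 : A)) ^ 2 = hC (-1) := by
  have h := eps_rel2 (0 : A) 0
  rw [add_zero] at h
  have h2 : epsC (0 : A) * epsC 0 = hC (-1) := mul_right_cancel h
  rw [sq]; exact h2

theorem hC_neg_one_sq : hC (-1 : Aˣ) * hC (-1) = 1 := by
  rw [hC_mul, neg_one_mul, neg_neg, hC_one]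

theorem hC_neg_one_eps (a : A) : hC (-1 : Aˣ) * epsC a = epsC a * hC (-1) := by
  have h := eps_rel3 (-1 : Aˣ) a
  have h' : hC (-1 : Aˣ) * epsC a * hC (-1) = epsC a := by
    simpa using h
  calc hC (-1 : Aˣ) * epsC a
      = hC (-1) * epsC a * (hC (-1) * hC (-1)) := by rw [hC_neg_one_sq, mul_one]
    _ = epsC a * hC (-1) := by rw [← mul_assoc, h']

theorem eps_key3 (a b : A) :
    epsC a * (epsC (0 : A)) ^ 3 * epsC b = epsC (a + b) := by
  calc epsC a * (epsC (0 : A)) ^ 3 * epsC b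
      = epsC a * ((epsC (0 : A)) ^ 2 * epsC 0) * epsC b := by rw [pow_succ]
    _ = epsC a * (hC (-1) * epsC 0) * epsC b := by rw [eps0_sq]
    _ = (epsC a * hC (-1)) * epsC 0 * epsC b := by group
    _ = (hC (-1) * epsC a) * epsC 0 * epsC b := by rw [← hC_neg_one_eps]
    _ = hC (-1) * (epsC a * epsC 0 * epsC b) := by group
    _ = hC (-1) * (hC (-1) * epsC (a + b)) := by rw [eps_rel2]
    _ = epsC (a + b) := by rw [← mul_assoc, hC_neg_one_sq, one_mul]

theorem yC_add (a b : A) : yC a * yC b = yC (a + b) := by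
  unfold yC
  calc (epsC (0 : A)) ^ 3 * epsC a * ((epsC (0 : A)) ^ 3 * epsC b)
      = (epsC (0 : A)) ^ 3 * (epsC a * (epsC (0 : A)) ^ 3 * epsC b) := by group
    _ = (epsC (0 : A)) ^ 3 * epsC (a + b) := by rw [eps_key3]

theorem yC_zero : yC (0 : A) = 1 := by
  have h : yC (0 : A) = (epsC (0 : A)) ^ 2 * (epsC (0 : A)) ^ 2 := by
    unfold yC; group
  rw [h, eps0_sq, hC_neg_one_sq]

theorem hC_eps (u : Aˣ) (a : A) :
    hC u * epsC a = epsC ((u : A) ^ 2 * a) * hC u⁻¹ := by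
  have h := eps_rel3 u a
  rw [← h, ← hC_inv]
  group

theorem hC_e0cube (u : Aˣ) :
    hC u * (epsC (0 : A)) ^ 3 = (epsC (0 : A)) ^ 3 * hC u⁻¹ := by
  calc hC u * (epsC (0 : A)) ^ 3
      = (hC u * epsC 0) * (epsC (0 : A)) ^ 2 := by group
    _ = epsC ((u : A) ^ 2 * 0) * hC u⁻¹ * hC (-1) := by rw [hC_eps, eps0_sq]
    _ = epsC 0 * (hC u⁻¹ * hC (-1)) := by rw [mul_zero, mul_assoc]
    _ = epsC 0 * (hC (-1) * hC u⁻¹) := by rw [hC_mul, hC_mul, mul_comm u⁻¹]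
    _ = epsC 0 * ((epsC (0 : A)) ^ 2 * hC u⁻¹) := by rw [← eps0_sq]
    _ = (epsC (0 : A)) ^ 3 * hC u⁻¹ := by group

theorem hC_yC (u : Aˣ) (a : A) :
    hC u * yC a = yC (((u⁻¹ : Aˣ) : A) ^ 2 * a) * hC u := by
  unfold yC
  calc hC u * ((epsC (0 : A)) ^ 3 * epsC a)
      = (hC u * (epsC (0 : A)) ^ 3) * epsC a := by group
    _ = (epsC (0 : A)) ^ 3 * (hC u⁻¹ * epsC a) := by rw [hC_e0cube]; group
    _ = (epsC (0 : A)) ^ 3 * (epsC (((u⁻¹ : Aˣ) : A) ^ 2 * a) * hC u⁻¹⁻¹) := by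
        rw [hC_eps]
    _ = (epsC (0 : A)) ^ 3 * epsC (((u⁻¹ : Aˣ) : A) ^ 2 * a) * hC u := by
        rw [inv_inv]; group

theorem yC_hC (u : Aˣ) (a : A) :
    yC a * hC u = hC u * yC ((u : A) ^ 2 * a) := by
  have h := hC_yC u ((u : A) ^ 2 * a)
  have h1 : ((u⁻¹ : Aˣ) : A) * (u : A) = 1 := by
    rw [← Units.val_mul, inv_mul_cancel, Units.val_one]
  have e : ((u⁻¹ : Aˣ) : A) ^ 2 * ((u : A) ^ 2 * a) = a := by
    calc ((u⁻¹ : Aˣ) : A) ^ 2 * ((u : A) ^ 2 * a)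
        = (((u⁻¹ : Aˣ) : A) * (u : A)) ^ 2 * a := by ring
      _ = a := by rw [h1, one_pow, one_mul]
  rw [e] at h
  exact h.symm

theorem betaC_mul (u v : Aˣ) (a b : A) :
    betaC u a * betaC v b = betaC (u * v) ((v : A) * a + ((u⁻¹ : Aˣ) : A) * b) := by
  unfold betaC
  have h1 : (u : A) * ((u⁻¹ : Aˣ) : A) = 1 := by
    rw [← Units.val_mul, mul_inv_cancel, Units.val_one]
  have e : ((u * v : Aˣ) : A) * ((v : A) * a + ((u⁻¹ : Aˣ) : A) * b)
      = (v : A) ^ 2 * ((u : A) * a) + (v : A) * b := by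
    rw [Units.val_mul]
    calc ((u : A) * (v : A)) * ((v : A) * a + ((u⁻¹ : Aˣ) : A) * b)
        = (v : A) ^ 2 * ((u : A) * a)
            + ((u : A) * ((u⁻¹ : Aˣ) : A)) * ((v : A) * b) := by ring
      _ = (v : A) ^ 2 * ((u : A) * a) + (v : A) * b := by rw [h1, one_mul]
  calc hC u * yC ((u : A) * a) * (hC v * yC ((v : A) * b))
      = hC u * (yC ((u : A) * a) * hC v) * yC ((v : A) * b) := by group
    _ = hC u * (hC v * yC ((v : A) ^ 2 * ((u : A) * a))) * yC ((v : A) * b) := by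
        rw [yC_hC]
    _ = (hC u * hC v) * (yC ((v : A) ^ 2 * ((u : A) * a)) * yC ((v : A) * b)) := by
        group
    _ = hC (u * v) * yC ((v : A) ^ 2 * ((u : A) * a) + (v : A) * b) := by
        rw [hC_mul, yC_add]
    _ = hC (u * v) * yC (((u * v : Aˣ) : A) * ((v : A) * a + ((u⁻¹ : Aˣ) : A) * b)) := by
        rw [e]

theorem betaC_one : betaC (1 : Aˣ) (0 : A) = 1 := by
  unfold betaC
  rw [hC_one, one_mul, mul_zero, yC_zero]

theorem betaC_inv (u : Aˣ) (a : A) : (betaC u a)⁻¹ = betaC u⁻¹ (-a) := by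
  have h : betaC u a * betaC u⁻¹ (-a) = 1 := by
    rw [betaC_mul]
    have e : ((u⁻¹ : Aˣ) : A) * a + ((u⁻¹ : Aˣ) : A) * (-a) = 0 := by ring
    rw [e, mul_inv_cancel, betaC_one]
  exact inv_eq_of_mul_eq_one_right h

theorem psiC_hC (u : Aˣ) : psiC A (hC u) = DSL u := by
  rw [hC, _root_.map_mul, _root_.map_mul]
  simp only [psiC_epsC]
  exact ESL_h u

/-- Lower triangular element of SL₂. -/
def LSL (u : Aˣ) (a : A) : Matrix.SpecialLinearGroup (Fin 2) A :=
  ⟨!![(u : A), 0; a, ((u⁻¹ : Aˣ) : A)], by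
    simp [Matrix.det_fin_two_of]⟩

theorem psiC_betaC (u : Aˣ) (a : A) : psiC A (betaC u a) = LSL u a := by
  have hy : betaC u a = hC u * (epsC 0 * epsC 0 * epsC 0 * epsC ((u : A) * a)) := by
    rw [betaC, yC, pow_succ, pow_succ, pow_one]
  rw [hy, _root_.map_mul, _root_.map_mul, _root_.map_mul, _root_.map_mul, psiC_hC]
  simp only [psiC_epsC]
  apply Subtype.ext
  show (!![(u : A), 0; 0, ((u⁻¹ : Aˣ) : A)] *
      (!![(0 : A), 1; -1, 0] * !![(0 : A), 1; -1, 0] * !![(0 : A), 1; -1, 0] *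
        !![(u : A) * a, 1; -1, 0])) = _
  ext i j
  fin_cases i <;> fin_cases j <;>
    simp [LSL, Matrix.mul_apply, Fin.sum_univ_two, Units.inv_mul_cancel_left]

/-- 𝔹 as a subgroup of C(A). -/
def bGrpC (A : Type*) [CommRing A] : Subgroup (CGroup A) where
  carrier := {x | ∃ (u : Aˣ) (a : A), x = betaC u a}
  one_mem' := ⟨1, 0, betaC_one.symm⟩
  mul_mem' := by
    rintro x y ⟨u, a, rfl⟩ ⟨v, b, rfl⟩
    exact ⟨u * v, (v : A) * a + ((u⁻¹ : Aˣ) : A) * b, betaC_mul u v a b⟩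
  inv_mem' := by
    rintro x ⟨u, a, rfl⟩
    exact ⟨u⁻¹, -a, betaC_inv u a⟩

/-- The lower-triangular subgroup of SL₂. -/
def bGrpSL (A : Type*) [CommRing A] : Subgroup (Matrix.SpecialLinearGroup (Fin 2) A) where
  carrier := {S | (S : Matrix (Fin 2) (Fin 2) A) 0 1 = 0}
  one_mem' := by
    show ((1 : Matrix.SpecialLinearGroup (Fin 2) A) : Matrix (Fin 2) (Fin 2) A) 0 1 = 0
    simp
  mul_mem' := by
    intro S T hS hT
    show ((S * T : Matrix.SpecialLinearGroup (Fin 2) A) : Matrix (Fin 2) (Fin 2) A) 0 1 = 0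
    rw [Matrix.SpecialLinearGroup.coe_mul, Matrix.mul_apply, Fin.sum_univ_two]
    rw [show ((S : Matrix (Fin 2) (Fin 2) A) 0 1 = 0) from hS,
      show ((T : Matrix (Fin 2) (Fin 2) A) 0 1 = 0) from hT]
    ring
  inv_mem' := by
    intro S hS
    show ((S⁻¹ : Matrix.SpecialLinearGroup (Fin 2) A) : Matrix (Fin 2) (Fin 2) A) 0 1 = 0
    rw [Matrix.SpecialLinearGroup.SL2_inv_expl]
    show -(S : Matrix (Fin 2) (Fin 2) A) 0 1 = 0
    rw [show ((S : Matrix (Fin 2) (Fin 2) A) 0 1 = 0) from hS, neg_zero]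

end Aux

/-- The subset 𝔹 = {β(u,a)} of C(A) is a subgroup, and ψ restricts to a
group isomorphism from 𝔹 onto the group B of lower-triangular matrices in SL₂(A). -/
theorem stmt12 (A : Type*) [CommRing A] :
    (∃ H : Subgroup (CGroup A),
      (H : Set (CGroup A)) = {x | ∃ (u : Aˣ) (a : A), x = betaC u a}) ∧
    (∃ B : Subgroup (Matrix.SpecialLinearGroup (Fin 2) A),
      (B : Set (Matrix.SpecialLinearGroup (Fin 2) A)) =
        {S : Matrix.SpecialLinearGroup (Fin 2) A | (S : Matrix (Fin 2) (Fin 2) A) 0 1 = 0}) ∧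
    Set.BijOn (psiC A) {x | ∃ (u : Aˣ) (a : A), x = betaC u a}
      {S : Matrix.SpecialLinearGroup (Fin 2) A | (S : Matrix (Fin 2) (Fin 2) A) 0 1 = 0} := by
  refine ⟨⟨bGrpC A, rfl⟩, ⟨bGrpSL A, rfl⟩, ?_, ?_, ?_⟩
  · rintro x ⟨u, a, rfl⟩
    show ((psiC A (betaC u a) : Matrix (Fin 2) (Fin 2) A)) 0 1 = 0
    rw [psiC_betaC]
    simp [LSL]
  · rintro x ⟨u, a, rfl⟩ y ⟨v, b, rfl⟩ h
    rw [psiC_betaC, psiC_betaC] at h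
    have hm := congrArg (fun S : Matrix.SpecialLinearGroup (Fin 2) A =>
      (S : Matrix (Fin 2) (Fin 2) A)) h
    have h00 : (u : A) = (v : A) := by
      have := congrFun (congrFun hm 0) 0
      simpa [LSL] using this
    have h10 : a = b := by
      have := congrFun (congrFun hm 1) 0
      simpa [LSL] using this
    rw [show u = v from Units.ext h00, h10]
  · rintro S hS
    have hdet : (S : Matrix (Fin 2) (Fin 2) A) 0 0 * (S : Matrix (Fin 2) (Fin 2) A) 1 1 = 1 := by
      have h2 := S.2
      rw [Matrix.det_fin_two] at h2
      rw [show ((S : Matrix (Fin 2) (Fin 2) A) 0 1 = 0) from hS] at h2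
      linear_combination h2
    set u : Aˣ := Units.mkOfMulEqOne _ _ hdet with hu
    refine ⟨betaC u ((S : Matrix (Fin 2) (Fin 2) A) 1 0), ⟨u, _, rfl⟩, ?_⟩
    rw [psiC_betaC]
    apply Subtype.ext
    have hval : (u : A) = (S : Matrix (Fin 2) (Fin 2) A) 0 0 := rfl
    have hinv : ((u⁻¹ : Aˣ) : A) = (S : Matrix (Fin 2) (Fin 2) A) 1 1 :=
      Units.inv_eq_of_mul_eq_one_right hdet
    show !![(u : A), 0; _, ((u⁻¹ : Aˣ) : A)] = _
    ext i j
    fin_cases i <;> fin_cases j <;>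
      simp [hval, hinv, show ((S : Matrix (Fin 2) (Fin 2) A) 0 1 = 0) from hS]
end
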